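/- arXiv:2007.10165 — 2 statements merged into one kernel-verified Lean document; each statement's English description precedes it below -/
import Mathlib

section
/- Let Z ⊂ ℙⁿ be a finite set of points satisfying the Cayley–Bacharach property CB(i). Then for every integer j with 0 ≤ j ≤ i+1, one has Dh_Z(0) + Dh_Z(1) + ⋯ + Dh_Z(j) ≤ Dh_Z(i+1−j) + Dh_Z(i+2−j) + ⋯ + Dh_Z(i+1). -/
open MvPolynomial BigOperators

noncomputable section

/-- The linear form `a₀x₀ + ⋯ + a_{N-1}x_{N-1}` associated to a coefficient vector. -/
def linForm {N : ℕ} (v : Fin N → ℂ) : MvPolynomial (Fin N) ℂ :=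
  ∑ i, C (v i) * X i

/-- A finite set of nonzero, pairwise non-proportional vectors, representing a finite
set of points in projective space. -/
def ValidPoints {N : ℕ} (A : Finset (Fin N → ℂ)) : Prop :=
  (∀ v ∈ A, v ≠ 0) ∧ ∀ v ∈ A, ∀ w ∈ A, v ≠ w → ∀ c : ℂ, w ≠ c • v

/-- Two sets of points are (projectively) disjoint: no vector of one is proportional to a
vector of the other. -/
def ProjDisjoint {N : ℕ} (A B : Finset (Fin N → ℂ)) : Prop :=
  ∀ v ∈ A, ∀ w ∈ B, ∀ c : ℂ, w ≠ c • v

/-- Two sets of points coincide as sets of projective points. -/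
def ProjEq {N : ℕ} (A B : Finset (Fin N → ℂ)) : Prop :=
  (∀ v ∈ A, ∃ w ∈ B, ∃ c : ℂ, w = c • v) ∧ (∀ w ∈ B, ∃ v ∈ A, ∃ c : ℂ, w = c • v)

/-- `A` computes the degree-`d` form `T`: `T` lies in the span of the `d`-th powers of the
linear forms associated to the points of `A`. -/
def Computes {N : ℕ} (A : Finset (Fin N → ℂ)) (d : ℕ) (T : MvPolynomial (Fin N) ℂ) : Prop :=
  T ∈ Submodule.span ℂ ((fun v => linForm v ^ d) '' (A : Set (Fin N → ℂ)))

/-- `A` is a non-redundant decomposition of `T`: it computes `T` and no proper subset does. -/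
def NonRedundant {N : ℕ} (A : Finset (Fin N → ℂ)) (d : ℕ)
    (T : MvPolynomial (Fin N) ℂ) : Prop :=
  Computes A d T ∧ ∀ A' ⊂ A, ¬ Computes A' d T

/-- The evaluation map on forms of degree `j`. -/
def evalMap {N : ℕ} (A : Finset (Fin N → ℂ)) (j : ℕ) :
    (homogeneousSubmodule (Fin N) ℂ j) →ₗ[ℂ] (↥A → ℂ) :=
  LinearMap.pi fun v : ↥A =>
    (aeval (v.1 : Fin N → ℂ)).toLinearMap ∘ₗ (homogeneousSubmodule (Fin N) ℂ j).subtype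

/-- The Hilbert function of a finite set of points: the rank of the evaluation map in each
degree, and `0` in negative degrees. -/
def hilb {N : ℕ} (A : Finset (Fin N → ℂ)) (j : ℤ) : ℤ :=
  if j < 0 then 0 else (Module.finrank ℂ (LinearMap.range (evalMap A j.toNat)) : ℤ)

/-- The first difference of the Hilbert function. -/
def Dhilb {N : ℕ} (A : Finset (Fin N → ℂ)) (j : ℤ) : ℤ :=
  hilb A j - hilb A (j - 1)

/-- `Dhilb Z` takes the values prescribed by the list `l` in degrees `0, …, l.length - 1`. -/
def DhProfile {N : ℕ} (Z : Finset (Fin N → ℂ)) (l : List ℤ) : Prop :=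
  ∀ j : ℕ, j < l.length → Dhilb Z (j : ℤ) = l.getD j 0

/-- The homogeneous ideal of a finite set of points: all polynomials vanishing at every
representative vector. -/
def pointsIdeal {N : ℕ} (A : Finset (Fin N → ℂ)) : Ideal (MvPolynomial (Fin N) ℂ) :=
  ⨅ v ∈ A, RingHom.ker (eval v)

/-- The degree-`j` graded piece `(I_A)_j` of the homogeneous ideal of `A`, as a
`ℂ`-subspace of the polynomial ring. -/
def idealPiece {N : ℕ} (A : Finset (Fin N → ℂ)) (j : ℕ) :
    Submodule ℂ (MvPolynomial (Fin N) ℂ) :=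
  (Submodule.restrictScalars ℂ (pointsIdeal A)) ⊓ homogeneousSubmodule (Fin N) ℂ j

/-- The `d`-th Kruskal rank of `A`: the largest `k` (at most `ℓ(A)`) such that for every
subset `A' ⊆ A` with `ℓ(A') ≤ k` the powers `{L_v^d : v ∈ A'}` are linearly independent. -/
def kruskalRank {N : ℕ} (A : Finset (Fin N → ℂ)) (d : ℕ) : ℕ :=
  sSup {k : ℕ | k ≤ A.card ∧ ∀ A' ⊆ A, A'.card ≤ k →
    LinearIndependent ℂ (fun v : ↥A' => linForm (v.1 : Fin N → ℂ) ^ d)}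

/-- The Cayley–Bacharach property `CB(i)`: every form of degree `i` vanishing on `Z`
minus one point also vanishes at that point. -/
def CayleyBacharach {N : ℕ} (Z : Finset (Fin N → ℂ)) (i : ℕ) : Prop :=
  ∀ P ∈ Z, ∀ F : MvPolynomial (Fin N) ℂ, F.IsHomogeneous i →
    (∀ v ∈ Z.erase P, eval v F = 0) → eval P F = 0

end

noncomputable section AuxProof

open Finset Module

attribute [local instance] Classical.propDecidable

variable {N : ℕ}

def Ew (Z : Finset (Fin N → ℂ)) (t : ℕ) : Submodule ℂ (↥Z → ℂ) :=
  LinearMap.range (evalMap Z t)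

lemma mem_Ew {Z : Finset (Fin N → ℂ)} {t : ℕ} {f : ↥Z → ℂ} :
    f ∈ Ew Z t ↔ ∃ F : MvPolynomial (Fin N) ℂ, F.IsHomogeneous t ∧
      ∀ v : ↥Z, aeval (v : Fin N → ℂ) F = f v := by
  constructor
  · rintro ⟨⟨F, hF⟩, rfl⟩
    exact ⟨F, (mem_homogeneousSubmodule _ _).1 hF, fun v => rfl⟩
  · rintro ⟨F, hF, hval⟩
    refine ⟨⟨F, (mem_homogeneousSubmodule _ _).2 hF⟩, funext fun v => ?_⟩
    simp only [evalMap, LinearMap.pi_apply, LinearMap.comp_apply, Submodule.subtype_apply,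
      AlgHom.toLinearMap_apply]
    exact hval v

lemma mul_mem_Ew {Z : Finset (Fin N → ℂ)} {a b : ℕ} {f g : ↥Z → ℂ}
    (hf : f ∈ Ew Z a) (hg : g ∈ Ew Z b) : f * g ∈ Ew Z (a + b) := by
  rw [mem_Ew] at hf hg ⊢
  obtain ⟨F, hF, hFv⟩ := hf
  obtain ⟨G, hG, hGv⟩ := hg
  exact ⟨F * G, hF.mul hG, fun v => by simp [map_mul, hFv v, hGv v]⟩

lemma one_mem_Ew {Z : Finset (Fin N → ℂ)} : (1 : ↥Z → ℂ) ∈ Ew Z 0 := by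
  rw [mem_Ew]
  exact ⟨1, isHomogeneous_one _ _, fun v => by simp⟩

lemma pow_mem_Ew {Z : Finset (Fin N → ℂ)} {f : ↥Z → ℂ} (hf : f ∈ Ew Z 1) (k : ℕ) :
    f ^ k ∈ Ew Z k := by
  induction k with
  | zero => simpa using one_mem_Ew
  | succ k ih =>
      have := mul_mem_Ew ih hf
      rwa [← pow_succ] at this

lemma lfun_mem (Z : Finset (Fin N → ℂ)) (c : Fin N → ℂ) :
    (fun v : ↥Z => ∑ k, c k * (v : Fin N → ℂ) k) ∈ Ew Z 1 := by
  rw [mem_Ew]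
  refine ⟨∑ k, C (c k) * X k, ?_, ?_⟩
  · rw [← mem_homogeneousSubmodule]
    refine Submodule.sum_mem _ fun k _ => ?_
    rw [C_mul']
    exact Submodule.smul_mem _ _ ((mem_homogeneousSubmodule _ _).2 (isHomogeneous_X _ _))
  · intro v
    simp [map_sum]

lemma pi_sum_single {ι : Type*} [Fintype ι] [DecidableEq ι] (f : ι → ℂ) :
    ∑ v, f v • (Pi.single v (1 : ℂ) : ι → ℂ) = f := by
  funext j
  rw [Finset.sum_apply]
  have : ∀ v : ι, (f v • (Pi.single v (1:ℂ) : ι → ℂ)) j = if j = v then f v else 0 := by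
    intro v
    by_cases h : j = v <;> simp [Pi.single_apply, h]
  rw [Finset.sum_congr rfl fun v _ => this v]
  simp

lemma dual_sum_single {ι : Type*} [Fintype ι] [DecidableEq ι] (φ : (ι → ℂ) →ₗ[ℂ] ℂ) (f : ι → ℂ) :
    φ f = ∑ v, f v * φ (Pi.single v 1) := by
  conv_lhs => rw [← pi_sum_single f]
  rw [map_sum]
  simp [smul_eq_mul]

lemma exists_dual_sep {W : Type*} [AddCommGroup W] [Module ℂ W]
    {U : Submodule ℂ W} {w : W} (hw : w ∉ U) :
    ∃ φ : W →ₗ[ℂ] ℂ, (∀ u ∈ U, φ u = 0) ∧ φ w ≠ 0 := by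
  have h : (Submodule.Quotient.mk w : W ⧸ U) ≠ 0 := by
    simpa [Submodule.Quotient.mk_eq_zero] using hw
  obtain ⟨ψ, hψ⟩ : ∃ ψ : Module.Dual ℂ (W ⧸ U), ψ (Submodule.Quotient.mk w) ≠ 0 := by
    by_contra hcon
    push_neg at hcon
    exact h ((Module.forall_dual_apply_eq_zero_iff ℂ _).1 hcon)
  refine ⟨ψ ∘ₗ U.mkQ, fun u hu => ?_, hψ⟩
  have : U.mkQ u = 0 := (Submodule.Quotient.mk_eq_zero U).2 hu
  simp [this]

def perp {Z : Finset (Fin N → ℂ)} (U : Submodule ℂ (↥Z → ℂ)) : Submodule ℂ (↥Z → ℂ) where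
  carrier := {x | ∀ f ∈ U, ∑ v, x v * f v = 0}
  zero_mem' := by intro f _; simp
  add_mem' := by
    intro a b ha hb f hf
    have : ∀ v : ↥Z, (a + b) v * f v = a v * f v + b v * f v := by
      intro v; simp [add_mul]
    rw [Finset.sum_congr rfl fun v _ => this v, Finset.sum_add_distrib, ha f hf, hb f hf, add_zero]
  smul_mem' := by
    intro c a ha f hf
    have : ∀ v : ↥Z, (c • a) v * f v = c * (a v * f v) := by
      intro v; simp [smul_eq_mul, mul_assoc]
    rw [Finset.sum_congr rfl fun v _ => this v, ← Finset.mul_sum, ha f hf, mul_zero]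

lemma avoid {Z : Finset (Fin N → ℂ)} (X : Submodule ℂ (↥Z → ℂ))
    (h : ∀ P : ↥Z, ∃ x ∈ X, x P ≠ 0) : ∃ x ∈ X, ∀ P, x P ≠ 0 := by
  suffices H : ∀ S : Finset ↥Z, ∃ x ∈ X, ∀ P ∈ S, x P ≠ 0 by
    obtain ⟨x, hx, hxall⟩ := H Finset.univ
    exact ⟨x, hx, fun P => hxall P (Finset.mem_univ P)⟩
  intro S
  induction S using Finset.induction_on with
  | empty => exact ⟨0, X.zero_mem, by simp⟩
  | @insert P₀ S hP ih =>
      obtain ⟨x, hxX, hxS⟩ := ih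
      obtain ⟨y, hyX, hyP⟩ := h P₀
      obtain ⟨t, ht⟩ := Infinite.exists_notMem_finset
        ((insert P₀ S).image fun P => - x P / y P)
      refine ⟨x + t • y, X.add_mem hxX (X.smul_mem t hyX), ?_⟩
      intro P hPmem
      have hP' : - x P / y P ≠ t := fun he => ht (he ▸ Finset.mem_image_of_mem _ hPmem)
      by_cases hy : y P = 0
      · have hPS : P ∈ S := by
          rcases Finset.mem_insert.1 hPmem with rfl | hs
          · exact absurd hy hyP
          · exact hs
        simp [hy, hxS P hPS]
      · intro hz
        apply hP'
        have hz' : x P + t * y P = 0 := by simpa [smul_eq_mul] using hz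
        rw [div_eq_iff hy]
        linear_combination - hz'


lemma Ew_top {Z : Finset (Fin N → ℂ)} {m : ℕ}
    (h : ∀ P : ↥Z, (Pi.single P (1:ℂ) : ↥Z → ℂ) ∈ Ew Z m) :
    Module.finrank ℂ (Ew Z m) = Z.card := by
  have htop : Ew Z m = ⊤ := by
    rw [eq_top_iff]
    intro f _
    rw [← pi_sum_single f]
    exact Submodule.sum_mem _ fun v _ => Submodule.smul_mem _ _ (h v)
  rw [htop, finrank_top, Module.finrank_fintype_fun_eq_card, Fintype.card_coe]

lemma caseA {Z : Finset (Fin N → ℂ)} {i j : ℕ} (hij : j ≤ i) (xx : ↥Z → ℂ)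
    (hx : xx ∈ perp (Ew Z i)) (hx0 : ∀ v, xx v ≠ 0) :
    Module.finrank ℂ (Ew Z j) + Module.finrank ℂ (Ew Z (i - j)) ≤ Z.card := by
  have p1 : ∀ m n p : ↥Z → ℂ, (∑ v, xx v * (m + n) v * p v)
      = (∑ v, xx v * m v * p v) + ∑ v, xx v * n v * p v := by
    intro m n p
    rw [← Finset.sum_add_distrib]
    exact Finset.sum_congr rfl fun v _ => by simp only [Pi.add_apply]; ring
  have p2 : ∀ (c : ℂ) (m p : ↥Z → ℂ), (∑ v, xx v * (c • m) v * p v)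
      = c • ∑ v, xx v * m v * p v := by
    intro c m p
    rw [smul_eq_mul, Finset.mul_sum]
    exact Finset.sum_congr rfl fun v _ => by simp only [Pi.smul_apply, smul_eq_mul]; ring
  have p3 : ∀ m n p : ↥Z → ℂ, (∑ v, xx v * m v * (n + p) v)
      = (∑ v, xx v * m v * n v) + ∑ v, xx v * m v * p v := by
    intro m n p
    rw [← Finset.sum_add_distrib]
    exact Finset.sum_congr rfl fun v _ => by simp only [Pi.add_apply]; ring
  have p4 : ∀ (c : ℂ) (m p : ↥Z → ℂ), (∑ v, xx v * m v * (c • p) v)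
      = c • ∑ v, xx v * m v * p v := by
    intro c m p
    rw [smul_eq_mul, Finset.mul_sum]
    exact Finset.sum_congr rfl fun v _ => by simp only [Pi.smul_apply, smul_eq_mul]; ring
  let B : (↥Z → ℂ) →ₗ[ℂ] (↥Z → ℂ) →ₗ[ℂ] ℂ :=
    LinearMap.mk₂ ℂ (fun w b => ∑ v, xx v * w v * b v) p1 p2 p3 p4
  let ν : ↥(Ew Z (i-j)) →ₗ[ℂ] Module.Dual ℂ (↥Z → ℂ) := B.flip ∘ₗ (Ew Z (i-j)).subtype
  have hνapp : ∀ (b : ↥(Ew Z (i-j))) (w : ↥Z → ℂ), ν b w = ∑ v, xx v * w v * b.1 v :=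
    fun b w => rfl
  have hνinj : Function.Injective ν := by
    rw [injective_iff_map_eq_zero]
    intro b hb
    have hval : ∀ v₀ : ↥Z, b.1 v₀ = 0 := by
      intro v₀
      have h1 : ν b (Pi.single v₀ 1) = 0 := by rw [hb]; rfl
      rw [hνapp] at h1
      have h2 : ∀ v : ↥Z, xx v * (Pi.single v₀ (1:ℂ) : ↥Z → ℂ) v * b.1 v
          = if v = v₀ then xx v₀ * b.1 v₀ else 0 := by
        intro v
        by_cases hv : v = v₀ <;> simp [Pi.single_apply, hv]
      rw [Finset.sum_congr rfl fun v _ => h2 v, Finset.sum_ite_eq' Finset.univ v₀] at h1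
      simp at h1
      rcases h1 with h1 | h1
      · exact absurd h1 (hx0 v₀)
      · exact h1
    ext v
    exact hval v
  let Λ : (↥Z → ℂ) →ₗ[ℂ] Module.Dual ℂ ↥(Ew Z (i-j)) :=
    ν.dualMap ∘ₗ (Module.evalEquiv ℂ (↥Z → ℂ)).toLinearMap
  have hΛapp : ∀ (w : ↥Z → ℂ) (b : ↥(Ew Z (i-j))), Λ w b = ∑ v, xx v * w v * b.1 v := by
    intro w b
    rfl
  have hker : Ew Z j ≤ LinearMap.ker Λ := by
    intro w hw
    rw [LinearMap.mem_ker]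
    apply LinearMap.ext
    intro b
    rw [hΛapp]
    have hwb : (w * b.1) ∈ Ew Z i := by
      have := mul_mem_Ew hw b.2
      rwa [Nat.add_sub_cancel' hij] at this
    have h0 := hx (w * b.1) hwb
    rw [LinearMap.zero_apply, ← h0]
    exact Finset.sum_congr rfl fun v _ => by simp only [Pi.mul_apply]; ring
  have hrange : Module.finrank ℂ (LinearMap.range Λ) = Module.finrank ℂ (Ew Z (i-j)) := by
    have h1 : LinearMap.range Λ = LinearMap.range ν.dualMap := by
      apply LinearMap.range_comp_of_range_eq_top
      exact LinearEquiv.range _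
    rw [h1, LinearMap.finrank_range_dualMap_eq_finrank_range,
      LinearMap.finrank_range_of_inj hνinj]
  have hrn := LinearMap.finrank_range_add_finrank_ker Λ
  have hdim : Module.finrank ℂ (↥Z → ℂ) = Z.card := by
    rw [Module.finrank_fintype_fun_eq_card, Fintype.card_coe]
  have hj := Submodule.finrank_mono hker
  rw [hdim, hrange] at hrn
  omega


lemma ep_up {Z : Finset (Fin N → ℂ)} {P : ↥Z} {t s : ℕ} (hts : t ≤ s) {l : ↥Z → ℂ}
    (hl : l ∈ Ew Z 1) (hl0 : ∀ v, l v ≠ 0)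
    (h : (Pi.single P (1:ℂ) : ↥Z → ℂ) ∈ Ew Z t) : (Pi.single P (1:ℂ) : ↥Z → ℂ) ∈ Ew Z s := by
  have hmul := mul_mem_Ew (pow_mem_Ew hl (s - t)) h
  rw [Nat.sub_add_cancel hts] at hmul
  have key : l ^ (s - t) * (Pi.single P (1:ℂ) : ↥Z → ℂ)
      = (l P)^(s-t) • (Pi.single P (1:ℂ) : ↥Z → ℂ) := by
    funext v
    by_cases hv : v = P
    · subst hv
      simp [Pi.single_apply, Pi.pow_apply]
    · simp [Pi.single_apply, hv]
  rw [key] at hmul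
  have hne : (l P)^(s-t) ≠ 0 := pow_ne_zero _ (hl0 P)
  have h2 := Submodule.smul_mem (Ew Z s) ((l P)^(s-t))⁻¹ hmul
  rwa [smul_smul, inv_mul_cancel₀ hne, one_smul] at h2

lemma exists_l {Z : Finset (Fin N → ℂ)} (hZ : ∀ v ∈ Z, v ≠ 0) :
    ∃ l : ↥Z → ℂ, l ∈ Ew Z 1 ∧ ∀ v, l v ≠ 0 := by
  let μ : (Fin N → ℂ) →ₗ[ℂ] (↥Z → ℂ) :=
    { toFun := fun c => fun v => ∑ k, c k * (v : Fin N → ℂ) k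
      map_add' := by
        intro c d; funext v
        rw [Pi.add_apply, ← Finset.sum_add_distrib]
        exact Finset.sum_congr rfl fun k _ => by simp [add_mul]
      map_smul' := by
        intro r c; funext v
        simp only [RingHom.id_apply, Pi.smul_apply, smul_eq_mul]
        rw [Finset.mul_sum]
        exact Finset.sum_congr rfl fun k _ => by
          first
          | ring
          | (simp only [Pi.smul_apply, smul_eq_mul]; ring) }
  have hpt : ∀ P : ↥Z, ∃ x ∈ LinearMap.range μ, x P ≠ 0 := by
    intro P
    have hP0 : (P : Fin N → ℂ) ≠ 0 := hZ _ P.2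
    obtain ⟨k, hk⟩ := Function.ne_iff.1 hP0
    refine ⟨μ (Pi.single k 1), LinearMap.mem_range_self _ _, ?_⟩
    have hP1 : μ (Pi.single k 1) P = ∑ m, (Pi.single k (1:ℂ) : Fin N → ℂ) m * (P : Fin N → ℂ) m := rfl
    rw [hP1, Finset.sum_congr rfl
      (fun m _ => show (Pi.single k (1:ℂ) : Fin N → ℂ) m * (P : Fin N → ℂ) m
          = if m = k then (P : Fin N → ℂ) k else 0 from by
        by_cases hm : m = k <;> simp [Pi.single_apply, hm]),
      Finset.sum_ite_eq' Finset.univ k]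
    simpa using hk
  obtain ⟨x, hxX, hx0⟩ := avoid (LinearMap.range μ) hpt
  obtain ⟨c, rfl⟩ := hxX
  exact ⟨_, lfun_mem Z c, hx0⟩

def resL (Z : Finset (Fin N → ℂ)) (p₀ : Fin N → ℂ) : (↥Z → ℂ) →ₗ[ℂ] (↥(Z.erase p₀) → ℂ) :=
  LinearMap.funLeft ℂ ℂ (fun v => ⟨v.1, Finset.mem_of_mem_erase v.2⟩)

lemma Ew_res (Z : Finset (Fin N → ℂ)) (p₀ : Fin N → ℂ) (t : ℕ) :
    Ew (Z.erase p₀) t = Submodule.map (resL Z p₀) (Ew Z t) := by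
  have hcomp : evalMap (Z.erase p₀) t = (resL Z p₀) ∘ₗ evalMap Z t := by
    apply LinearMap.ext
    intro F
    rfl
  rw [Ew, hcomp, LinearMap.range_comp]
  rfl

lemma finrank_res (Z : Finset (Fin N → ℂ)) {p₀ : Fin N → ℂ} (hp₀ : p₀ ∈ Z) (t : ℕ)
    (h : (Pi.single (⟨p₀, hp₀⟩ : ↥Z) (1:ℂ) : ↥Z → ℂ) ∉ Ew Z t) :
    Module.finrank ℂ (Ew (Z.erase p₀) t) = Module.finrank ℂ (Ew Z t) := by
  have hinj : Function.Injective ((resL Z p₀) ∘ₗ (Ew Z t).subtype) := by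
    rw [injective_iff_map_eq_zero]
    intro f hf
    have hval : ∀ v : ↥Z, v ≠ ⟨p₀, hp₀⟩ → f.1 v = 0 := by
      intro v hv
      have hv' : v.1 ∈ Z.erase p₀ :=
        Finset.mem_erase.2 ⟨fun he => hv (Subtype.ext he), v.2⟩
      have h0 : ((resL Z p₀) f.1) ⟨v.1, hv'⟩ = 0 := by
        have : (resL Z p₀) f.1 = 0 := hf
        rw [this]; rfl
      exact h0
    by_contra hf0
    have hc : f.1 ⟨p₀, hp₀⟩ ≠ 0 := by
      intro h0
      apply hf0
      apply Subtype.ext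
      funext v
      by_cases hv : v = ⟨p₀, hp₀⟩
      · rw [hv]; exact h0
      · exact hval v hv
    apply h
    have hsingle : (Pi.single (⟨p₀, hp₀⟩ : ↥Z) (1:ℂ) : ↥Z → ℂ) = (f.1 ⟨p₀, hp₀⟩)⁻¹ • f.1 := by
      funext v
      by_cases hv : v = ⟨p₀, hp₀⟩
      · subst hv
        simp [Pi.single_apply, inv_mul_cancel₀ hc]
      · simp [Pi.single_apply, hv, hval v hv]
    rw [hsingle]
    exact Submodule.smul_mem _ _ f.2
  have hr : LinearMap.range ((resL Z p₀) ∘ₗ (Ew Z t).subtype) = Ew (Z.erase p₀) t := by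
    rw [LinearMap.range_comp, Submodule.range_subtype, Ew_res]
  rw [← hr, LinearMap.finrank_range_of_inj hinj]

lemma validpoints_mono {A B : Finset (Fin N → ℂ)} (hAB : A ⊆ B) (h : ValidPoints B) :
    ValidPoints A :=
  ⟨fun v hv => h.1 v (hAB hv), fun v hv w hw => h.2 v (hAB hv) w (hAB hw)⟩


lemma aeval_eq_eval' (v : Fin N → ℂ) (F : MvPolynomial (Fin N) ℂ) :
    aeval v F = eval v F := by
  rw [← coe_aeval_eq_eval]
  rfl

lemma noedge {Z : Finset (Fin N → ℂ)} (hZ : ValidPoints Z) {i : ℕ} {Q P₀ : ↥Z}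
    (hQP : Q ≠ P₀) {lam : ℂ} (hlam : lam ≠ 0)
    (hmem : (Pi.single Q (1:ℂ) : ↥Z → ℂ) + lam • (Pi.single P₀ (1:ℂ) : ↥Z → ℂ) ∈ Ew Z i) :
    (Pi.single P₀ (1:ℂ) : ↥Z → ℂ) ∈ Ew Z (i+1) := by
  have hspan : (P₀ : Fin N → ℂ) ∉ Submodule.span ℂ {(Q : Fin N → ℂ)} := by
    rw [Submodule.mem_span_singleton]
    rintro ⟨a, ha⟩
    exact hZ.2 Q.1 Q.2 P₀.1 P₀.2 (fun he => hQP (Subtype.ext he)) a ha.symm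
  obtain ⟨φ, hφ0, hφP⟩ := exists_dual_sep hspan
  have hφQ : φ (Q : Fin N → ℂ) = 0 := hφ0 _ (Submodule.mem_span_singleton_self _)
  have hf : (fun v : ↥Z => φ (v : Fin N → ℂ)) ∈ Ew Z 1 := by
    have h1 := lfun_mem Z (fun k => φ (Pi.single k 1))
    have h2 : (fun v : ↥Z => ∑ k, φ (Pi.single k 1) * (v : Fin N → ℂ) k)
        = fun v : ↥Z => φ (v : Fin N → ℂ) := by
      funext v
      rw [dual_sum_single φ ((v : Fin N → ℂ))]
      exact Finset.sum_congr rfl fun k _ => mul_comm _ _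
    rwa [h2] at h1
  have hprod := mul_mem_Ew hf hmem
  have hkey : (fun v : ↥Z => φ (v : Fin N → ℂ)) * ((Pi.single Q (1:ℂ) : ↥Z → ℂ) + lam • (Pi.single P₀ (1:ℂ) : ↥Z → ℂ))
      = (lam * φ (P₀ : Fin N → ℂ)) • (Pi.single P₀ (1:ℂ) : ↥Z → ℂ) := by
    funext w
    simp only [Pi.mul_apply, Pi.add_apply, Pi.smul_apply, Pi.single_apply, smul_eq_mul]
    by_cases h1 : w = P₀
    · rw [h1]
      have hPQ : ¬ ((P₀ : ↥Z) = Q) := fun he => hQP he.symm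
      simp [hPQ]
      ring
    · by_cases h2 : w = Q
      · rw [h2]
        have hQP' : ¬ ((Q : ↥Z) = P₀) := hQP
        simp [hQP', hφQ]
      · simp [h1, h2]
  rw [hkey] at hprod
  have hne : (lam * φ (P₀ : Fin N → ℂ)) ≠ 0 := mul_ne_zero hlam hφP
  have h3 := Submodule.smul_mem (Ew Z (1 + i)) (lam * φ (P₀ : Fin N → ℂ))⁻¹ hprod
  rw [smul_smul, inv_mul_cancel₀ hne, one_smul] at h3
  have hii : 1 + i = i + 1 := Nat.add_comm 1 i
  rwa [hii] at h3

lemma cb_abs {Z : Finset (Fin N → ℂ)} {i : ℕ} (hCB : CayleyBacharach Z i) :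
    ∀ P : ↥Z, (Pi.single P (1:ℂ) : ↥Z → ℂ) ∉ Ew Z i := by
  intro P hmem
  rw [mem_Ew] at hmem
  obtain ⟨F, hF, hval⟩ := hmem
  have h0 : eval (P : Fin N → ℂ) F = 0 := by
    apply hCB P.1 P.2 F hF
    intro v hv
    have hvZ : v ∈ Z := Finset.mem_of_mem_erase hv
    have hvP : (⟨v, hvZ⟩ : ↥Z) ≠ P :=
      fun he => (Finset.mem_erase.1 hv).1 (congrArg Subtype.val he)
    have h1 := hval ⟨v, hvZ⟩
    rw [aeval_eq_eval'] at h1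
    rw [h1]
    simp [Pi.single_apply, hvP]
  have h1 := hval P
  rw [aeval_eq_eval', h0] at h1
  simp at h1

lemma core : ∀ (m : ℕ) (Z : Finset (Fin N → ℂ)), Z.card ≤ m → ValidPoints Z →
    ∀ i j : ℕ, j ≤ i → (∀ P : ↥Z, (Pi.single P (1:ℂ) : ↥Z → ℂ) ∉ Ew Z i) →
    Module.finrank ℂ (Ew Z j) + Module.finrank ℂ (Ew Z (i - j))
      ≤ Module.finrank ℂ (Ew Z (i + 1)) := by
  intro m
  induction m with
  | zero =>
      intro Z hcard hZ i j hij hCB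
      have hZ0 : Z = ∅ := Finset.card_eq_zero.1 (Nat.le_zero.1 hcard)
      subst hZ0
      have hdim : Module.finrank ℂ ((↥(∅ : Finset (Fin N → ℂ))) → ℂ) = 0 := by
        rw [Module.finrank_fintype_fun_eq_card]
        simp
      have h1 := Submodule.finrank_le (Ew (∅ : Finset (Fin N → ℂ)) j)
      have h2 := Submodule.finrank_le (Ew (∅ : Finset (Fin N → ℂ)) (i - j))
      omega
  | succ m ih =>
      intro Z hcard hZ i j hij hCB
      by_cases hall : ∀ P : ↥Z, (Pi.single P (1:ℂ) : ↥Z → ℂ) ∈ Ew Z (i+1)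
      · rw [Ew_top hall]
        have hpt : ∀ P : ↥Z, ∃ x ∈ perp (Ew Z i), x P ≠ 0 := by
          intro P
          obtain ⟨φ, hφ0, hφP⟩ := exists_dual_sep (hCB P)
          refine ⟨fun v => φ (Pi.single v 1), ?_, hφP⟩
          intro f hf
          calc (∑ v, φ (Pi.single v 1) * f v) = ∑ v, f v * φ (Pi.single v 1) :=
                Finset.sum_congr rfl fun v _ => mul_comm _ _
            _ = φ f := (dual_sum_single φ f).symm
            _ = 0 := hφ0 f hf
        obtain ⟨x, hxp, hx0⟩ := avoid _ hpt
        exact caseA hij x hxp hx0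
      · push_neg at hall
        obtain ⟨P₀, hP₀⟩ := hall
        obtain ⟨l, hl, hl0⟩ := exists_l hZ.1
        have hP₀t : ∀ t : ℕ, t ≤ i+1 → (Pi.single P₀ (1:ℂ) : ↥Z → ℂ) ∉ Ew Z t :=
          fun t ht hmem => hP₀ (ep_up ht hl hl0 hmem)
        have hp₀Z : (P₀ : Fin N → ℂ) ∈ Z := P₀.2
        have hcard' : (Z.erase (P₀ : Fin N → ℂ)).card ≤ m := by
          rw [Finset.card_erase_of_mem hp₀Z]
          omega
        have hZ' : ValidPoints (Z.erase (P₀ : Fin N → ℂ)) :=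
          validpoints_mono (Finset.erase_subset _ _) hZ
        have hCB' : ∀ P : ↥(Z.erase (P₀ : Fin N → ℂ)),
            (Pi.single P (1:ℂ) : ↥(Z.erase (P₀ : Fin N → ℂ)) → ℂ)
              ∉ Ew (Z.erase (P₀ : Fin N → ℂ)) i := by
          intro P hmem
          rw [Ew_res, Submodule.mem_map] at hmem
          obtain ⟨u, huE, hu⟩ := hmem
          have hQZ : P.1 ∈ Z := Finset.mem_of_mem_erase P.2
          set Q : ↥Z := ⟨P.1, hQZ⟩ with hQdef
          have hQP₀ : Q ≠ P₀ :=
            fun he => (Finset.mem_erase.1 P.2).1 (congrArg Subtype.val he)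
          have hudec : u = (Pi.single Q (1:ℂ) : ↥Z → ℂ) + (u P₀) • (Pi.single P₀ (1:ℂ) : ↥Z → ℂ) := by
            funext w
            by_cases hw : w = P₀
            · have hQ0 : (Pi.single Q (1:ℂ) : ↥Z → ℂ) P₀ = 0 := by
                have : P₀ ≠ Q := Ne.symm hQP₀
                simp [Pi.single_apply, this]
              rw [hw, Pi.add_apply, hQ0, Pi.smul_apply, Pi.single_eq_same, zero_add,
                smul_eq_mul, mul_one]
            · have hw' : w.1 ∈ Z.erase (P₀ : Fin N → ℂ) :=
                Finset.mem_erase.2 ⟨fun he => hw (Subtype.ext he), w.2⟩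
              have h1 : u w = (Pi.single P (1:ℂ) : ↥(Z.erase (P₀ : Fin N → ℂ)) → ℂ) ⟨w.1, hw'⟩ := by
                have h2 := congrFun hu ⟨w.1, hw'⟩
                rw [← h2]
                rfl
              have h2 : (Pi.single P₀ (1:ℂ) : ↥Z → ℂ) w = 0 := by
                simp [Pi.single_apply, hw]
              rw [h1, Pi.add_apply, Pi.smul_apply, h2, smul_eq_mul, mul_zero, add_zero]
              by_cases h3 : w = Q
              · have h5 : (w : Fin N → ℂ) = (P : Fin N → ℂ) := by rw [h3]
                have h4 : (⟨w.1, hw'⟩ : ↥(Z.erase (P₀ : Fin N → ℂ))) = P := Subtype.ext h5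
                rw [h4, h3]
                simp
              · have h4 : (⟨w.1, hw'⟩ : ↥(Z.erase (P₀ : Fin N → ℂ))) ≠ P := by
                  intro he
                  have h5 : (w : Fin N → ℂ) = (P : Fin N → ℂ) := congrArg Subtype.val he
                  exact h3 (Subtype.ext h5)
                simp [Pi.single_apply, h3, h4]
          by_cases hlam : u P₀ = 0
          · apply hCB Q
            rw [hudec, hlam, zero_smul, add_zero] at huE
            exact huE
          · refine hP₀t (i+1) le_rfl (noedge hZ hQP₀ hlam ?_)
            rw [← hudec]
            exact huE
        have IH := ih (Z.erase (P₀ : Fin N → ℂ)) hcard' hZ' i j hij hCB'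
        rw [finrank_res Z hp₀Z j (hP₀t j (by omega)),
            finrank_res Z hp₀Z (i-j) (hP₀t (i-j) (by omega)),
            finrank_res Z hp₀Z (i+1) (hP₀t (i+1) le_rfl)] at IH
        exact IH

lemma hilb_eq (Z : Finset (Fin N → ℂ)) (t : ℕ) :
    hilb Z (t:ℤ) = (Module.finrank ℂ (Ew Z t) : ℤ) := by
  have h1 : ¬ ((t:ℤ) < 0) := by omega
  simp only [hilb, if_neg h1, Int.toNat_natCast]
  rfl

lemma hilb_neg (Z : Finset (Fin N → ℂ)) : hilb Z (-1 : ℤ) = 0 := by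
  simp [hilb]

lemma tele (Z : Finset (Fin N → ℂ)) (a : ℤ) : ∀ m : ℕ,
    ∑ t ∈ Finset.range (m+1), Dhilb Z (a + t) = hilb Z (a + m) - hilb Z (a - 1) := by
  intro m
  induction m with
  | zero => simp [Dhilb]
  | succ m ihm =>
      rw [Finset.sum_range_succ, ihm, Dhilb]
      have h2 : (((m+1 : ℕ)):ℤ) = (m:ℤ)+1 := by push_cast; ring
      rw [h2]
      have h1 : a + ((m:ℤ)+1) - 1 = a + m := by ring
      rw [h1]
      ring

end AuxProof


/-- if `Z` satisfies the Cayley–Bacharach property `CB(i)`, then for every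
`0 ≤ j ≤ i + 1` one has `Dh_Z(0) + ⋯ + Dh_Z(j) ≤ Dh_Z(i+1−j) + ⋯ + Dh_Z(i+1)`. -/
theorem stmt_14 {n : ℕ} (Z : Finset (Fin (n + 1) → ℂ)) (hZ : ValidPoints Z)
    (i : ℕ) (hCB : CayleyBacharach Z i) :
    ∀ j : ℕ, j ≤ i + 1 →
      ∑ t ∈ Finset.range (j + 1), Dhilb Z (t : ℤ) ≤
        ∑ t ∈ Finset.range (j + 1), Dhilb Z ((i : ℤ) + 1 - (j : ℤ) + (t : ℤ)) := by
  intro j hj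
  have hLHS : ∑ t ∈ Finset.range (j+1), Dhilb Z (t:ℤ) = hilb Z (j:ℤ) := by
    have h := tele Z 0 j
    simp only [zero_add] at h
    rw [h]
    have : (0:ℤ) - 1 = -1 := by norm_num
    rw [this, hilb_neg, sub_zero]
  have hRHS : ∑ t ∈ Finset.range (j+1), Dhilb Z ((i:ℤ)+1-(j:ℤ)+(t:ℤ))
      = hilb Z ((i:ℤ)+1) - hilb Z ((i:ℤ)-(j:ℤ)) := by
    have h := tele Z ((i:ℤ)+1-(j:ℤ)) j
    have e1 : (i:ℤ)+1-(j:ℤ) + (j:ℤ) = (i:ℤ)+1 := by ring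
    have e2 : (i:ℤ)+1-(j:ℤ) - 1 = (i:ℤ)-(j:ℤ) := by ring
    rw [e1, e2] at h
    exact h
  rw [hLHS, hRHS]
  by_cases hcase : j ≤ i
  · have habs := cb_abs hCB
    have hcore := core Z.card Z le_rfl hZ i j hcase habs
    have e1 : hilb Z (j:ℤ) = (Module.finrank ℂ (Ew Z j) : ℤ) := hilb_eq Z j
    have e2 : hilb Z ((i:ℤ) - (j:ℤ)) = (Module.finrank ℂ (Ew Z (i-j)) : ℤ) := by
      have e : (i:ℤ) - (j:ℤ) = ((i - j : ℕ) : ℤ) := by omega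
      rw [e, hilb_eq]
    have e3 : hilb Z ((i:ℤ)+1) = (Module.finrank ℂ (Ew Z (i+1)) : ℤ) := by
      have e : (i:ℤ)+1 = ((i+1 : ℕ) : ℤ) := by push_cast; ring
      rw [e, hilb_eq]
    rw [e1, e2, e3]
    omega
  · have hji : j = i + 1 := by omega
    subst hji
    have e0 : (i:ℤ) - ((i+1 : ℕ):ℤ) = -1 := by push_cast; ring
    have e1 : (((i+1:ℕ)):ℤ) = (i:ℤ)+1 := by push_cast; ring
    rw [e0, e1, hilb_neg, sub_zero]
end

section
/- Let T ∈ R_d be a ternary form of degree d and let A, B ⊂ ℙ² be disjoint, non-redundant finite sets computing T. Then Z = A ∪ B satisfies the Cayley–Bacharach property CB(d). -/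
open MvPolynomial BigOperators

lemma coeff_linForm_pow {N d : ℕ} (w : Fin N → ℂ) (m : Fin N →₀ ℕ) :
    MvPolynomial.coeff m (linForm w ^ d) =
      if ∑ i, m i = d then (Nat.multinomial Finset.univ m : ℂ) * ∏ i, w i ^ m i else 0 := by
  rw [linForm, Finset.sum_pow_eq_sum_piAntidiag]
  rw [MvPolynomial.coeff_sum]
  have hterm : ∀ k ∈ Finset.piAntidiag (Finset.univ : Finset (Fin N)) d,
      MvPolynomial.coeff m ((Nat.multinomial Finset.univ k : MvPolynomial (Fin N) ℂ)
        * ∏ i, (C (w i) * X i) ^ k i)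
      = if k = ⇑m then (Nat.multinomial Finset.univ k : ℂ) * ∏ i, w i ^ k i else 0 := by
    intro k _
    have h1 : ∏ i, (C (w i) * X i) ^ k i
        = C (∏ i, w i ^ k i) * monomial (Finsupp.equivFunOnFinite.symm k) 1 := by
      rw [MvPolynomial.monomial_eq, C_1, one_mul]
      rw [Finsupp.prod_fintype]
      · simp_rw [mul_pow, ← C_pow, Finset.prod_mul_distrib, map_prod]
        rfl
      · intro i; exact pow_zero _
    rw [h1, ← map_natCast (C : ℂ →+* MvPolynomial (Fin N) ℂ), ← mul_assoc, ← map_mul,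
      MvPolynomial.coeff_C_mul, MvPolynomial.coeff_monomial]
    have heq : (Finsupp.equivFunOnFinite.symm k = m) ↔ (k = ⇑m) := by
      constructor
      · intro h; rw [← h]; rfl
      · intro h; apply Finsupp.equivFunOnFinite.symm_apply_eq.mpr; rw [h]; rfl
    split_ifs with h h' h'
    · rw [mul_one]
    · exact absurd (heq.mp h) h'
    · exact absurd (heq.mpr h') h
    · rw [mul_zero]
  rw [Finset.sum_congr rfl hterm, Finset.sum_ite_eq' (Finset.piAntidiag Finset.univ d) (⇑m)
    (fun k => (Nat.multinomial Finset.univ k : ℂ) * ∏ i, w i ^ k i)]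
  have hmem : (⇑m ∈ Finset.piAntidiag (Finset.univ : Finset (Fin N)) d) ↔ (∑ i, m i = d) := by
    simp [Finset.mem_piAntidiag]
  rw [if_congr hmem rfl rfl]

lemma pairing_eval {N d : ℕ} {F : MvPolynomial (Fin N) ℂ} (hF : F.IsHomogeneous d)
    (w : Fin N → ℂ) :
    ∑ m ∈ F.support, (MvPolynomial.coeff m F * ∏ i, ((m i).factorial : ℂ))
        * MvPolynomial.coeff m (linForm w ^ d)
      = (d.factorial : ℂ) * eval w F := by
  rw [eval_eq', Finset.mul_sum]
  apply Finset.sum_congr rfl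
  intro m hm
  have hd : ∑ i, m i = d := by
    have h1 := hF (MvPolynomial.mem_support_iff.mp hm)
    have h2 : (Finsupp.weight (1 : Fin N → ℕ)) m = ∑ i, m i := by
      erw [← Finsupp.degree_eq_weight_one, Finsupp.degree_apply]
      apply Finset.sum_subset (Finset.subset_univ _)
      intro i _ hi
      exact Finsupp.notMem_support_iff.mp hi
    rw [← h2, h1]
  rw [coeff_linForm_pow, if_pos hd]
  have hmult : ((∏ i, ((m i).factorial : ℂ)) * (Nat.multinomial Finset.univ m : ℂ))
      = (d.factorial : ℂ) := by
    have := Nat.multinomial_spec (Finset.univ : Finset (Fin N)) m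
    rw [hd] at this
    exact_mod_cast congrArg (Nat.cast : ℕ → ℂ) this
  calc (MvPolynomial.coeff m F * ∏ i, ((m i).factorial : ℂ))
        * ((Nat.multinomial Finset.univ m : ℂ) * ∏ i, w i ^ m i)
      = ((∏ i, ((m i).factorial : ℂ)) * (Nat.multinomial Finset.univ m : ℂ))
        * (MvPolynomial.coeff m F * ∏ i, w i ^ m i) := by ring
    _ = (d.factorial : ℂ) * (MvPolynomial.coeff m F * ∏ i, w i ^ m i) := by rw [hmult]

lemma aux_vanish {N d : ℕ} {T : MvPolynomial (Fin N) ℂ} {A B : Finset (Fin N → ℂ)}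
    (hAnr : NonRedundant A d T) (hBc : Computes B d T) {P : Fin N → ℂ} (hP : P ∈ A)
    {F : MvPolynomial (Fin N) ℂ} (hF : F.IsHomogeneous d)
    (hvanA : ∀ v ∈ A.erase P, eval v F = 0) (hvanB : ∀ v ∈ B, eval v F = 0) :
    eval P F = 0 := by
  obtain ⟨c, hcsupp, hc⟩ := (Finsupp.mem_span_image_iff_linearCombination ℂ).mp hAnr.1
  rw [Finsupp.mem_supported] at hcsupp
  have hcP : c P ≠ 0 := by
    intro h0
    apply hAnr.2 (A.erase P) (Finset.erase_ssubset hP)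
    apply (Finsupp.mem_span_image_iff_linearCombination ℂ).mpr
    refine ⟨c, ?_, hc⟩
    rw [Finsupp.mem_supported]
    intro v hv
    have hvA : v ∈ A := hcsupp hv
    have hvP : v ≠ P := fun h => (Finsupp.mem_support_iff.mp hv) (h ▸ h0)
    exact Finset.mem_coe.mpr (Finset.mem_erase.mpr ⟨hvP, hvA⟩)
  set Ψ : MvPolynomial (Fin N) ℂ →ₗ[ℂ] ℂ :=
    ∑ m ∈ F.support, (MvPolynomial.coeff m F * ∏ i, ((m i).factorial : ℂ))
      • MvPolynomial.lcoeff ℂ m with hΨ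
  have hΨpow : ∀ w : Fin N → ℂ, Ψ (linForm w ^ d) = (d.factorial : ℂ) * eval w F := by
    intro w
    rw [hΨ, LinearMap.sum_apply]
    simp only [LinearMap.smul_apply, MvPolynomial.lcoeff_apply, smul_eq_mul]
    exact pairing_eval hF w
  have key : ∀ l : (Fin N → ℂ) →₀ ℂ,
      Ψ (Finsupp.linearCombination ℂ (fun v => linForm v ^ d) l)
      = ∑ v ∈ l.support, l v * ((d.factorial : ℂ) * eval v F) := by
    intro l
    rw [Finsupp.linearCombination_apply, Finsupp.sum, map_sum]
    apply Finset.sum_congr rfl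
    intro v _
    rw [map_smul, hΨpow, smul_eq_mul]
  obtain ⟨e, hesupp, he⟩ := (Finsupp.mem_span_image_iff_linearCombination ℂ).mp hBc
  rw [Finsupp.mem_supported] at hesupp
  have hB0 : Ψ T = 0 := by
    rw [← he, key]
    apply Finset.sum_eq_zero
    intro v hv
    rw [hvanB v (Finset.mem_coe.mp (hesupp hv)), mul_zero, mul_zero]
  have hA0 : Ψ T = c P * ((d.factorial : ℂ) * eval P F) := by
    rw [← hc, key]
    apply Finset.sum_eq_single_of_mem P (Finsupp.mem_support_iff.mpr hcP)
    intro v hv hne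
    rw [hvanA v (Finset.mem_erase.mpr ⟨hne, Finset.mem_coe.mp (hcsupp hv)⟩), mul_zero, mul_zero]
  have h0 := hA0.symm.trans hB0
  rcases mul_eq_zero.mp h0 with h | h
  · exact absurd h hcP
  rcases mul_eq_zero.mp h with h | h
  · exact absurd h (Nat.cast_ne_zero.mpr (Nat.factorial_ne_zero d))
  · exact h

/-- if `A, B` are disjoint non-redundant decompositions of a ternary form of
degree `d`, then `Z = A ∪ B` satisfies the Cayley–Bacharach property `CB(d)`. -/
theorem stmt_15 {d : ℕ} (T : MvPolynomial (Fin 3) ℂ) (hT : T.IsHomogeneous d)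
    (A B : Finset (Fin 3 → ℂ)) (hA : ValidPoints A) (hB : ValidPoints B)
    (hAB : ProjDisjoint A B)
    (hAnr : NonRedundant A d T) (hBnr : NonRedundant B d T) :
    CayleyBacharach (A ∪ B) d := by
  have hABd : ∀ x, x ∈ A → x ∈ B → False := fun x hxA hxB =>
    hAB x hxA x hxB 1 (one_smul ℂ x).symm
  intro P hP F hFhom hvan
  rcases Finset.mem_union.mp hP with hPA | hPB
  · apply aux_vanish hAnr hBnr.1 hPA hFhom
    · intro v hv
      exact hvan v (Finset.mem_erase.mpr
        ⟨(Finset.mem_erase.mp hv).1, Finset.mem_union_left _ (Finset.mem_erase.mp hv).2⟩)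
    · intro v hv
      refine hvan v (Finset.mem_erase.mpr ⟨?_, Finset.mem_union_right _ hv⟩)
      intro h
      exact hABd P hPA (h ▸ hv)
  · apply aux_vanish hBnr hAnr.1 hPB hFhom
    · intro v hv
      exact hvan v (Finset.mem_erase.mpr
        ⟨(Finset.mem_erase.mp hv).1, Finset.mem_union_right _ (Finset.mem_erase.mp hv).2⟩)
    · intro v hv
      refine hvan v (Finset.mem_erase.mpr ⟨?_, Finset.mem_union_left _ hv⟩)
      intro h
      exact hABd P (h ▸ hv) hPB
end
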